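/- Let B be a simple bipartite graph with bipartition V(B) = W ⊎ U, G its half-square, D = (T, β_D) a nice tree decomposition of B, and D' = (T, β_{D'}) the derived decomposition of G. Let v ∈ W and s ∈ U with v ∈ N_B(s), and suppose the set Q = { t ∈ V(T) : v ∈ Fake(t) and s ∈ β_D(t) } is nonempty. Let x be a node of T that is a forget(v) node of D, and let y be the unique child of a node of T that is a forget(s) node of D. Then y is an ancestor of x, and Q is exactly the vertex set of the unique path in T between x and y. -/

import Mathlib

open SimpleGraph

section Defs

variable {V : Type*} {ι : Type*}

/-- `W, U` is a bipartition of the simple graph `B`. -/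
def IsBipartition (B : SimpleGraph V) (W U : Set V) : Prop :=
  (∀ v, v ∈ W ∨ v ∈ U) ∧ (∀ v, ¬(v ∈ W ∧ v ∈ U)) ∧
    ∀ ⦃a b⦄, B.Adj a b → (a ∈ W ∧ b ∈ U) ∨ (a ∈ U ∧ b ∈ W)

/-- The half-square of `B` on side `W`: two distinct vertices of `W` are adjacent
iff they have a common neighbor in `B`. -/
def halfSquare (B : SimpleGraph V) (W : Set V) : SimpleGraph V where
  Adj a b := a ≠ b ∧ a ∈ W ∧ b ∈ W ∧ ∃ s, B.Adj a s ∧ B.Adj b s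
  symm := by
    constructor
    rintro a b ⟨hne, ha, hb, s, h1, h2⟩
    exact ⟨hne.symm, hb, ha, s, h2, h1⟩
  loopless := by constructor; rintro a ⟨hne, _⟩; exact hne rfl

/-- Tree decomposition of the graph `H` with vertex set `S`, over the tree `T`. -/
structure IsTreeDecompOn (H : SimpleGraph V) (S : Set V) (T : SimpleGraph ι)
    (β : ι → Set V) : Prop where
  covers : ∀ v ∈ S, ∃ t, v ∈ β t
  edge_mem : ∀ ⦃u v⦄, H.Adj u v → ∃ t, u ∈ β t ∧ v ∈ β t
  conn : ∀ v ∈ S, (T.induce {t | v ∈ β t}).Connected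

/-- `t'` is a descendant of `t` (inclusively) in the tree `T` rooted at `r`:
`t` lies on every path from `t'` to the root. -/
def Desc (T : SimpleGraph ι) (r : ι) (t t' : ι) : Prop :=
  ∀ p : T.Walk t' r, p.IsPath → t ∈ p.support

/-- `γ(t)`: union of the bags of `t` and of all its descendants. -/
def gammaSet (T : SimpleGraph ι) (r : ι) (β : ι → Set V) (t : ι) : Set V :=
  ⋃ t' ∈ {t' | Desc T r t t'}, β t'

/-- The bag of the derived decomposition. -/
def derivedBag (B : SimpleGraph V) (W U : Set V) (T : SimpleGraph ι) (r : ι)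
    (β : ι → Set V) (t : ι) : Set V :=
  (β t ∩ W) ∪ ⋃ s ∈ β t ∩ U, B.neighborSet s ∩ gammaSet T r β t

def originalSet (B : SimpleGraph V) (W U : Set V) (T : SimpleGraph ι) (r : ι)
    (β : ι → Set V) (t : ι) : Set V :=
  β t ∩ derivedBag B W U T r β t

def fakeSet (B : SimpleGraph V) (W U : Set V) (T : SimpleGraph ι) (r : ι)
    (β : ι → Set V) (t : ι) : Set V :=
  derivedBag B W U T r β t \ β t

def cliquesAt (B : SimpleGraph V) (U : Set V) (β : ι → Set V) (t : ι) : Set (Set V) :=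
  {K | ∃ s ∈ β t ∩ U, K = B.neighborSet s}

def IsChild (T : SimpleGraph ι) (r : ι) (t t' : ι) : Prop :=
  T.Adj t t' ∧ Desc T r t t'

def IsLeafNode (T : SimpleGraph ι) (r : ι) (β : ι → Set V) (t : ι) : Prop :=
  (∀ t', ¬ IsChild T r t t') ∧ β t = ∅

def IsForgetNode (T : SimpleGraph ι) (r : ι) (β : ι → Set V) (w : V) (t : ι) : Prop :=
  ∃ t', IsChild T r t t' ∧ (∀ t'', IsChild T r t t'' → t'' = t') ∧
    w ∈ β t' ∧ β t = β t' \ {w}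

def IsIntroduceNode (T : SimpleGraph ι) (r : ι) (β : ι → Set V) (w : V) (t : ι) : Prop :=
  ∃ t', IsChild T r t t' ∧ (∀ t'', IsChild T r t t'' → t'' = t') ∧
    w ∈ β t ∧ β t \ {w} = β t'

def IsJoinNode (T : SimpleGraph ι) (r : ι) (β : ι → Set V) (t : ι) : Prop :=
  ∃ t₁ t₂, t₁ ≠ t₂ ∧ IsChild T r t t₁ ∧ IsChild T r t t₂ ∧
    (∀ t'', IsChild T r t t'' → t'' = t₁ ∨ t'' = t₂) ∧ β t = β t₁ ∧ β t = β t₂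

/-- A nice (rooted) tree decomposition. -/
def IsNice (T : SimpleGraph ι) (r : ι) (β : ι → Set V) : Prop :=
  β r = ∅ ∧ ∀ t, IsLeafNode T r β t ∨ (∃ w, IsForgetNode T r β w t) ∨
    (∃ w, IsIntroduceNode T r β w t) ∨ IsJoinNode T r β t

/-- `E(X)`: edges of `G` with both endpoints in `X`. -/
def edgesIn (G : SimpleGraph V) (X : Set V) : Set (Sym2 V) :=
  {e | e ∈ G.edgeSet ∧ ∀ x ∈ e, x ∈ X}

end Defs
section TreeHelpers

variable {ι : Type*} [DecidableEq ι] {T : SimpleGraph ι} {r : ι}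

open SimpleGraph Walk

lemma desc_refl (t : ι) : Desc T r t t := fun p _ => p.start_mem_support

lemma desc_trans {a b c : ι} (h1 : Desc T r a b) (h2 : Desc T r b c) :
    Desc T r a c := by
  intro p hp
  have hb : b ∈ p.support := h2 p hp
  exact p.support_dropUntil_subset hb (h1 (p.dropUntil b hb) (hp.dropUntil hb))

/-- Transfer membership between two paths with the same endpoints. -/
lemma path_support_eq (hT : T.IsAcyclic) {a b : ι} {p q : T.Walk a b}
    (hp : p.IsPath) (hq : q.IsPath) : p.support = q.support := by
  have := hT.path_unique ⟨p, hp⟩ ⟨q, hq⟩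
  exact congrArg (fun w : T.Path a b => (w : T.Walk a b).support) this

lemma desc_of_path (hT : T.IsAcyclic) {a t : ι} (p0 : T.Walk a r)
    (h0 : p0.IsPath) (ht : t ∈ p0.support) : Desc T r t a := by
  intro p hp
  rwa [path_support_eq hT h0 hp] at ht

lemma exists_path (hc : T.Connected) (a b : ι) :
    ∃ p : T.Walk a b, p.IsPath := by
  obtain ⟨w⟩ := hc.preconnected a b
  exact ⟨w.toPath, w.toPath.isPath⟩

lemma desc_antisymm (hc : T.Connected) {a c : ι}
    (h1 : Desc T r a c) (h2 : Desc T r c a) : a = c := by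
  by_contra hne
  obtain ⟨p, hp⟩ := exists_path hc c r
  have ha : a ∈ p.support := h1 p hp
  have hcmem : c ∈ (p.dropUntil a ha).support := h2 _ (hp.dropUntil ha)
  rw [(p.dropUntil a ha).support_eq_cons] at hcmem
  rcases List.mem_cons.mp hcmem with h | h
  · exact hne h.symm
  have hnodup := hp.support_nodup
  rw [← p.take_spec ha, Walk.support_append] at hnodup
  exact (List.nodup_append'.mp hnodup).2.2 (p.takeUntil a ha).start_mem_support h

/-- Split membership of a path support at an intermediate vertex. -/
lemma mem_take_or_drop {a b u t : ι} (p : T.Walk a b) (hu : u ∈ p.support)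
    (ht : t ∈ p.support) :
    t ∈ (p.takeUntil u hu).support ∨ t ∈ (p.dropUntil u hu).support := by
  rw [← p.take_spec hu, Walk.support_append, List.mem_append] at ht
  rcases ht with h | h
  · exact Or.inl h
  · exact Or.inr (List.mem_of_mem_tail h)

/-- If `a` is an ancestor of `b` and `c` an ancestor of `a`, then `a` lies on
every path from `b` to `c`. -/
lemma mem_path_of_between (hT : T.IsTree) {a b c : ι}
    (h1 : Desc T r a b) (h2 : Desc T r c a) (p : T.Walk b c) (hp : p.IsPath) :
    a ∈ p.support := by
  obtain ⟨q, hq⟩ := exists_path hT.isConnected b r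
  have ha : a ∈ q.support := h1 q hq
  have hc : c ∈ q.support := (desc_trans h2 h1) q hq
  have key : a ∈ (q.takeUntil c hc).support := by
    rcases mem_take_or_drop q hc ha with h | h
    · exact h
    · have hac : Desc T r a c := desc_of_path hT.IsAcyclic _ (hq.dropUntil hc) h
      have : a = c := desc_antisymm hT.isConnected hac h2
      subst this
      exact (q.takeUntil a hc).end_mem_support
  rwa [path_support_eq hT.IsAcyclic hp (hq.takeUntil hc)]

/-- Every vertex of a path between two vertices of a connected set lies in
that set. -/
lemma support_subset_of_induce_connected (hT : T.IsAcyclic) {S : Set ι}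
    (hconn : (T.induce S).Connected) {a b : ι} (ha : a ∈ S) (hb : b ∈ S)
    (p : T.Walk a b) (hp : p.IsPath) : ∀ u ∈ p.support, u ∈ S := by
  obtain ⟨w⟩ := hconn.preconnected ⟨a, ha⟩ ⟨b, hb⟩
  let w' : T.Walk a b := w.map (SimpleGraph.Embedding.induce S).toHom
  have hsub : ∀ u ∈ w'.support, u ∈ S := by
    intro u hu
    rw [show w'.support = _ from Walk.support_map _ w] at hu
    obtain ⟨u', _, rfl⟩ := List.mem_map.mp hu
    exact u'.2
  intro u hu
  have heq := path_support_eq hT hp w'.toPath.isPath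
  rw [heq] at hu
  exact hsub _ (w'.support_toPath_subset hu)

/-- Ordering along a path: if `t` occurs in the prefix up to `y`, then `y`
occurs in the suffix from `t`. -/
lemma mem_drop_of_mem_take (hT : T.IsAcyclic) {a b t y : ι} {q : T.Walk a b}
    (hq : q.IsPath) (hy : y ∈ q.support) (htq : t ∈ q.support)
    (ht : t ∈ (q.takeUntil y hy).support) :
    y ∈ (q.dropUntil t htq).support := by
  by_cases hty : t = y
  · subst hty; exact Walk.start_mem_support _
  rcases mem_take_or_drop q htq hy with h | h
  · exfalso
    have hwp : (q.takeUntil t htq).IsPath := hq.takeUntil htq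
    have h1 : t ∈ ((q.takeUntil t htq).takeUntil y h).support := by
      rw [path_support_eq hT (hwp.takeUntil h) (hq.takeUntil hy)]; exact ht
    have h2 : t ∈ ((q.takeUntil t htq).dropUntil y h).support :=
      Walk.end_mem_support _
    rw [Walk.support_eq_cons] at h2
    rcases List.mem_cons.mp h2 with h' | h'
    · exact hty h'
    have hnodup := hwp.support_nodup
    rw [← (q.takeUntil t htq).take_spec h, Walk.support_append] at hnodup
    exact (List.nodup_append'.mp hnodup).2.2 h1 h'
  · exact h

/-- If `y` lies in a connected set `S` whose parent `z` is outside `S`, then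
`y` is an ancestor of every element of `S`. -/
lemma desc_top (hT : T.IsTree) {z y : ι} (hadj : T.Adj z y)
    (hdesc : Desc T r z y) {S : Set ι} (hconn : (T.induce S).Connected)
    (hy : y ∈ S) (hz : z ∉ S) {t : ι} (ht : t ∈ S) : Desc T r y t := by
  obtain ⟨q, hqp⟩ := exists_path hT.isConnected t y
  have hqS : ∀ u ∈ q.support, u ∈ S :=
    support_subset_of_induce_connected hT.IsAcyclic hconn ht hy q hqp
  have hzq : z ∉ q.support := fun h => hz (hqS z h)
  intro p hp
  -- first, z lies on p
  have hzp : z ∈ p.support := by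
    have hzW : z ∈ (q.reverse.append p).support := by
      have := hdesc (q.reverse.append p).toPath
        (q.reverse.append p).toPath.isPath
      exact (q.reverse.append p).support_toPath_subset this
    rw [Walk.support_append, List.mem_append] at hzW
    rcases hzW with h | h
    · exact absurd (by rwa [Walk.support_reverse, List.mem_reverse] at h) hzq
    · exact List.mem_of_mem_tail h
  -- the path t → z is q followed by the edge y-z, hence contains y
  have hcp : (q.concat hadj.symm).IsPath := by
    rw [Walk.isPath_def, Walk.support_concat,
      List.nodup_append']
    exact ⟨hqp.support_nodup, List.nodup_singleton z,
      fun u hu hu' => by rw [List.mem_singleton.mp hu'] at hu; exact hzq hu⟩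
  have : y ∈ (p.takeUntil z hzp).support := by
    rw [path_support_eq hT.IsAcyclic (hp.takeUntil hzp) hcp,
      Walk.support_concat]
    rw [List.mem_append]
    exact Or.inl q.end_mem_support
  exact p.support_takeUntil_subset hzp this

/-- A strict ancestor of a child is an ancestor of the parent. -/
lemma desc_parent (hT : T.IsTree) {x x' t : ι} (hadj : T.Adj x x')
    (hdesc : Desc T r x x') (hne : t ≠ x') (h : Desc T r t x') :
    Desc T r t x := by
  obtain ⟨q, hq⟩ := exists_path hT.isConnected x' r
  have hx : x ∈ q.support := hdesc q hq
  have ht : t ∈ q.support := h q hq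
  rcases mem_take_or_drop q hx ht with hcase | hcase
  · -- takeUntil x is the single edge x' - x
    have hsingle : (Walk.cons hadj.symm Walk.nil : T.Walk x' x).IsPath := by
      simp [Walk.isPath_def, hadj.ne']
    have := path_support_eq hT.IsAcyclic (hq.takeUntil hx) hsingle
    rw [this] at hcase
    simp only [Walk.support_cons, Walk.support_nil, List.mem_cons,
      List.mem_singleton, List.not_mem_nil, or_false] at hcase
    rcases hcase with h' | h'
    · exact absurd h' hne
    · rw [h']
      exact desc_refl x
  · exact desc_of_path hT.IsAcyclic _ (hq.dropUntil hx) hcase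

/-- On a path from `x` towards an ancestor `y`, every vertex is an ancestor
of `x` and a descendant of `y`. -/
lemma chain_of_mem_path (hT : T.IsTree) {x y t : ι} (hyx : Desc T r y x)
    (p : T.Walk x y) (hp : p.IsPath) (ht : t ∈ p.support) :
    Desc T r t x ∧ Desc T r y t := by
  obtain ⟨q, hq⟩ := exists_path hT.isConnected x r
  have hy : y ∈ q.support := hyx q hq
  have ht' : t ∈ (q.takeUntil y hy).support := by
    rwa [← path_support_eq hT.IsAcyclic hp (hq.takeUntil hy)]
  have htq : t ∈ q.support := q.support_takeUntil_subset hy ht'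
  refine ⟨desc_of_path hT.IsAcyclic q hq htq, ?_⟩
  have hyd : y ∈ (q.dropUntil t htq).support :=
    mem_drop_of_mem_take hT.IsAcyclic hq hy htq ht'
  exact desc_of_path hT.IsAcyclic _ (hq.dropUntil htq) hyd

end TreeHelpers
/-- if `v ∈ N_B(s)` and `Q = {t | v ∈ Fake(t) ∧ s ∈ β_D(t)}` is
nonempty, `x` is a forget(v) node and `y` is the unique child of a forget(s)
node, then `y` is an ancestor of `x` and `Q` is the vertex set of the unique
path between `x` and `y`. -/
theorem stmt_1 {V : Type*} {ι : Type*} (B : SimpleGraph V) (W U : Set V)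
    (hbip : IsBipartition B W U)
    (T : SimpleGraph ι) (r : ι) (hT : T.IsTree) (β : ι → Set V)
    (hD : IsTreeDecompOn B Set.univ T β) (hnice : IsNice T r β)
    (v s : V) (hvW : v ∈ W) (hsU : s ∈ U) (hvs : v ∈ B.neighborSet s)
    (hQ : {t | v ∈ fakeSet B W U T r β t ∧ s ∈ β t}.Nonempty)
    (x z y : ι) (hx : IsForgetNode T r β v x)
    (hz : IsForgetNode T r β s z) (hy : IsChild T r z y) :
    Desc T r y x ∧
      ∀ p : T.Walk x y, p.IsPath →
        {t | v ∈ fakeSet B W U T r β t ∧ s ∈ β t} = {t | t ∈ p.support} := by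
  classical
  obtain ⟨x', ⟨hxadj, hxdesc⟩, _, hvx', hβx⟩ := hx
  obtain ⟨y', ⟨hzadj, hzdesc⟩, hzuniq, hsy', hβz⟩ := hz
  obtain rfl := hzuniq y hy
  have hvnx : v ∉ β x := by rw [hβx]; exact fun h => h.2 rfl
  have hsnz : s ∉ β z := by rw [hβz]; exact fun h => h.2 rfl
  have hconnv := hD.conn v (Set.mem_univ v)
  have hconns := hD.conn s (Set.mem_univ s)
  have TOPv : ∀ t, v ∈ β t → Desc T r x' t := fun t ht =>
    desc_top hT hxadj hxdesc hconnv hvx' hvnx ht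
  have TOPs : ∀ t, s ∈ β t → Desc T r y t := fun t ht =>
    desc_top hT hzadj hzdesc hconns hsy' hsnz ht
  have ANC : ∀ t, v ∉ β t → v ∈ gammaSet T r β t → Desc T r t x := by
    intro t hvt hγ
    simp only [gammaSet, Set.mem_iUnion, Set.mem_setOf_eq] at hγ
    obtain ⟨t', hdtt', hvt'⟩ := hγ
    obtain ⟨p, hp⟩ := exists_path hT.isConnected t' r
    have ht : t ∈ p.support := hdtt' p hp
    have hx'p : x' ∈ p.support := TOPv t' hvt' p hp
    rcases mem_take_or_drop p hx'p ht with h | h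
    · exact absurd (support_subset_of_induce_connected hT.IsAcyclic hconnv hvt'
        hvx' (p.takeUntil x' hx'p) (hp.takeUntil hx'p) t h) hvt
    · have hdtx' : Desc T r t x' :=
        desc_of_path hT.IsAcyclic _ (hp.dropUntil hx'p) h
      have hne : t ≠ x' := fun he => hvt (he ▸ hvx')
      exact desc_parent hT hxadj hxdesc hne hdtx'
  have fake_elim : ∀ t, v ∈ fakeSet B W U T r β t →
      v ∉ β t ∧ v ∈ gammaSet T r β t := by
    intro t h
    obtain ⟨hd, hnb⟩ := h
    refine ⟨hnb, ?_⟩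
    rcases hd with h | h
    · exact absurd h.1 hnb
    · simp only [Set.mem_iUnion] at h
      obtain ⟨s', hs', hvmem⟩ := h
      exact hvmem.2
  obtain ⟨t₀, hfake₀, hs₀⟩ := hQ
  obtain ⟨hv₀, hγ₀⟩ := fake_elim t₀ hfake₀
  have hdt₀x : Desc T r t₀ x := ANC t₀ hv₀ hγ₀
  have hAdj : B.Adj v s := ((B.mem_neighborSet s v).mp hvs).symm
  obtain ⟨t₁, hvt₁, hst₁⟩ := hD.edge_mem hAdj
  have hdxt₁ : Desc T r x t₁ := desc_trans hxdesc (TOPv t₁ hvt₁)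
  obtain ⟨p₁, hp₁⟩ := exists_path hT.isConnected t₁ t₀
  have hxmem : x ∈ p₁.support := mem_path_of_between hT hdxt₁ hdt₀x p₁ hp₁
  have hsx : s ∈ β x := support_subset_of_induce_connected hT.IsAcyclic hconns
    hst₁ hs₀ p₁ hp₁ x hxmem
  have hyx : Desc T r y x := TOPs x hsx
  refine ⟨hyx, ?_⟩
  intro p hp
  ext t
  simp only [Set.mem_setOf_eq]
  constructor
  · rintro ⟨hfake, hst⟩
    obtain ⟨hvt, hγt⟩ := fake_elim t hfake
    exact mem_path_of_between hT (ANC t hvt hγt) (TOPs t hst) p hp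
  · intro ht
    obtain ⟨hdtx, hdyt⟩ := chain_of_mem_path hT hyx p hp ht
    have hst : s ∈ β t := support_subset_of_induce_connected hT.IsAcyclic
      hconns hsx hsy' p hp t ht
    have hvt : v ∉ β t := by
      intro hv
      obtain ⟨p₂, hp₂⟩ := exists_path hT.isConnected x' t
      have hxm : x ∈ p₂.support := mem_path_of_between hT hxdesc hdtx p₂ hp₂
      exact hvnx (support_subset_of_induce_connected hT.IsAcyclic hconnv hvx'
        hv p₂ hp₂ x hxm)
    have hder : v ∈ derivedBag B W U T r β t := by
      refine Set.mem_union_right _ ?_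
      simp only [Set.mem_iUnion]
      refine ⟨s, ⟨hst, hsU⟩, hvs, ?_⟩
      simp only [gammaSet, Set.mem_iUnion, Set.mem_setOf_eq]
      exact ⟨x', desc_trans hdtx hxdesc, hvx'⟩
    exact ⟨⟨hder, hvt⟩, hst⟩
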